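/- For n ≥ 3, the complete bipartite graph K_{2,n} admits a unit-distance embedding in R^3 but not in R^2; that is, dim(K_{2,n}) = 3. -/

import Mathlib

open EuclideanGeometry AffineSubspace

private lemma dist3_eq (x y : EuclideanSpace ℝ (Fin 3)) :
    dist x y = Real.sqrt ((x 0 - y 0)^2 + (x 1 - y 1)^2 + (x 2 - y 2)^2) := by
  rw [EuclideanSpace.dist_eq, Fin.sum_univ_three]
  simp [Real.dist_eq, sq_abs]

/-- For `n ≥ 3`, the complete bipartite graph `K_{2,n}` admits a unit-distance embedding
in `ℝ³` but not in `ℝ²`; that is, `dim (K_{2,n}) = 3`.  Vertices are `Fin 2 ⊕ Fin n`,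
edges are exactly the cross pairs. -/
theorem dim_K2n (n : ℕ) (hn : 3 ≤ n) :
    (∃ f : Fin 2 ⊕ Fin n → EuclideanSpace ℝ (Fin 3),
      Function.Injective f ∧
      ∀ u v : Fin 2 ⊕ Fin n, dist (f u) (f v) = 1 ↔
        ((u.isLeft ∧ v.isRight) ∨ (u.isRight ∧ v.isLeft))) ∧
    ¬ (∃ f : Fin 2 ⊕ Fin n → EuclideanSpace ℝ (Fin 2),
      Function.Injective f ∧
      ∀ u v : Fin 2 ⊕ Fin n, dist (f u) (f v) = 1 ↔
        ((u.isLeft ∧ v.isRight) ∨ (u.isRight ∧ v.isLeft))) := by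
  constructor
  · -- unit-distance embedding in ℝ³
      have hn0 : (0:ℝ) < n := by exact_mod_cast Nat.lt_of_lt_of_le (by norm_num) hn
      set h : ℝ := Real.sqrt 8 / 3 with hdef
      have hhpos : 0 < h := by positivity
      have hh2 : h ^ 2 = 8 / 9 := by
        rw [hdef, div_pow, Real.sq_sqrt (by norm_num)]; norm_num
      set x : Fin n → ℝ := fun k => (k : ℝ) / (3 * n) with hxdef
      have hx_nonneg : ∀ k, 0 ≤ x k := fun k => by positivity
      have hx_lt : ∀ k, x k < 1/3 := fun k => by
        have hk : (k : ℝ) < n := by exact_mod_cast k.2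
        rw [hxdef]
        rw [div_lt_iff₀ (by positivity)]
        linarith
      have hx2_lt : ∀ k, x k ^ 2 < 1/9 := fun k =>
        by nlinarith [hx_nonneg k, hx_lt k]
      set y : Fin n → ℝ := fun k => Real.sqrt (1/9 - x k ^ 2) with hydef
      have hy_pos : ∀ k, 0 < y k := fun k => Real.sqrt_pos.2 (by linarith [hx2_lt k])
      have hy2 : ∀ k, y k ^ 2 = 1/9 - x k ^ 2 := fun k =>
        Real.sq_sqrt (by linarith [hx2_lt k])
      have hy_le : ∀ k, y k ≤ 1/3 := fun k => by nlinarith [hy_pos k, hy2 k, hx_nonneg k]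
      refine ⟨Sum.elim (fun j => WithLp.toLp 2 ![0, 0, if j = 0 then h else -h])
          (fun k => WithLp.toLp 2 ![x k, y k, 0]), ?_, ?_⟩
      · rintro (j | k) (j' | k') huv
        · have h2 := congrArg (fun v => v 2) huv
          simp only [Sum.elim_inl, PiLp.toLp_apply, Matrix.cons_val_two, Matrix.tail_cons, Matrix.head_cons] at h2
          fin_cases j <;> fin_cases j'
          · rfl
          · exfalso; simp at h2; linarith
          · exfalso; simp at h2; linarith
          · rfl
        · have h2 := congrArg (fun v => v 2) huv
          simp only [Sum.elim_inl, Sum.elim_inr, PiLp.toLp_apply, Matrix.cons_val_two, Matrix.tail_cons,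
            Matrix.head_cons] at h2
          split at h2 <;> linarith
        · have h2 := congrArg (fun v => v 2) huv
          simp only [Sum.elim_inl, Sum.elim_inr, PiLp.toLp_apply, Matrix.cons_val_two, Matrix.tail_cons,
            Matrix.head_cons] at h2
          split at h2 <;> linarith
        · have h0 := congrArg (fun v => v 0) huv
          simp only [Sum.elim_inr, PiLp.toLp_apply, Matrix.cons_val_zero] at h0
          rw [hxdef] at h0
          have : ((k : ℕ) : ℝ) = ((k' : ℕ) : ℝ) := by
            field_simp at h0
            exact_mod_cast h0
          exact congrArg Sum.inr (Fin.ext (by exact_mod_cast this))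
      · rintro (j | k) (j' | k')
        · refine iff_of_false ?_ (by simp)
          rw [dist3_eq]
          simp only [Sum.elim_inl, Matrix.cons_val_zero, Matrix.cons_val_one, Matrix.head_cons,
            Matrix.cons_val_two, Matrix.tail_cons]
          rw [Real.sqrt_eq_one]
          fin_cases j <;> fin_cases j' <;> simp
          all_goals constructor <;> intro hq <;> nlinarith [hh2, hhpos]
        · refine iff_of_true ?_ (by simp)
          rw [dist3_eq]
          simp only [Sum.elim_inl, Sum.elim_inr, Matrix.cons_val_zero, Matrix.cons_val_one,
            Matrix.head_cons, Matrix.cons_val_two, Matrix.tail_cons]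
          have hsq : ((if j = 0 then h else -h) - 0) ^ 2 = h ^ 2 := by split <;> ring
          have : (0 - x k') ^ 2 + (0 - y k') ^ 2 + ((if j = 0 then h else -h) - 0) ^ 2 = 1 := by
            rw [hsq, hh2]
            have := hy2 k'
            nlinarith
          rw [this, Real.sqrt_one]
        · refine iff_of_true ?_ (by simp)
          rw [dist3_eq]
          simp only [Sum.elim_inl, Sum.elim_inr, Matrix.cons_val_zero, Matrix.cons_val_one,
            Matrix.head_cons, Matrix.cons_val_two, Matrix.tail_cons]
          have hsq : (0 - (if j' = 0 then h else -h)) ^ 2 = h ^ 2 := by split <;> ring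
          have : (x k - 0) ^ 2 + (y k - 0) ^ 2 + (0 - (if j' = 0 then h else -h)) ^ 2 = 1 := by
            rw [hsq, hh2]
            have := hy2 k
            nlinarith
          rw [this, Real.sqrt_one]
        · refine iff_of_false ?_ (by simp)
          rw [dist3_eq]
          simp only [Sum.elim_inr, Matrix.cons_val_zero, Matrix.cons_val_one, Matrix.head_cons,
            Matrix.cons_val_two, Matrix.tail_cons]
          rw [Real.sqrt_eq_one]
          intro H
          nlinarith [hx_nonneg k, hx_lt k, hx_nonneg k', hx_lt k', hy_pos k, hy_le k,
            hy_pos k', hy_le k']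
  · -- no unit-distance embedding in ℝ²
    rintro ⟨f, hinj, hf⟩
    set a := f (.inl 0) with ha
    set b := f (.inl 1) with hb
    have hab : a ≠ b := fun h => by simpa using hinj h
    set g : Fin 3 → EuclideanSpace ℝ (Fin 2) := fun i => f (.inr (Fin.castLE hn i)) with hg
    have hginj : Function.Injective g := fun i j h => by
      have := hinj h
      simp only [Sum.inr.injEq] at this
      exact Fin.castLE_injective hn this
    have hga : ∀ i, dist (g i) a = 1 := fun i => (hf _ _).2 (by simp)
    have hgb : ∀ i, dist (g i) b = 1 := fun i => (hf _ _).2 (by simp)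
    have hcos : Cospherical ({g 0, g 1, g 2} : Set (EuclideanSpace ℝ (Fin 2))) := by
      refine ⟨a, 1, ?_⟩
      rintro p (rfl | rfl | rfl) <;> apply hga
    have hai : AffineIndependent ℝ ![g 0, g 1, g 2] :=
      hcos.affineIndependent_of_ne (by simp [hginj.ne_iff]) (by simp [hginj.ne_iff])
        (by simp [hginj.ne_iff])
    have hsub : ({g 0, g 1, g 2} : Set (EuclideanSpace ℝ (Fin 2))) ⊆ perpBisector a b := by
      rintro p (rfl | rfl | rfl) <;>
        · rw [SetLike.mem_coe, mem_perpBisector_iff_dist_eq]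
          rw [hga, hgb]
    have hle : vectorSpan ℝ ({g 0, g 1, g 2} : Set (EuclideanSpace ℝ (Fin 2))) ≤
        (perpBisector a b).direction := by
      rw [AffineSubspace.direction_eq_vectorSpan]
      exact vectorSpan_mono ℝ hsub
    have hdim : Module.finrank ℝ (perpBisector a b).direction = 1 := by
      rw [direction_perpBisector]
      have hv : (b -ᵥ a) ≠ 0 := by simpa [vsub_eq_sub, sub_eq_zero] using hab.symm
      have h1 : Module.finrank ℝ (ℝ ∙ (b -ᵥ a)) = 1 := finrank_span_singleton hv
      have h2 := Submodule.finrank_add_finrank_orthogonal (K := (ℝ ∙ (b -ᵥ a)))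
      have h3 : Module.finrank ℝ (EuclideanSpace ℝ (Fin 2)) = 2 := by simp
      omega
    have hcol : Collinear ℝ ({g 0, g 1, g 2} : Set (EuclideanSpace ℝ (Fin 2))) := by
      rw [collinear_iff_finrank_le_one]
      calc Module.finrank ℝ (vectorSpan ℝ ({g 0, g 1, g 2} : Set (EuclideanSpace ℝ (Fin 2))))
          ≤ Module.finrank ℝ (perpBisector a b).direction := Submodule.finrank_mono hle
        _ = 1 := hdim
    exact (affineIndependent_iff_not_collinear_set.1 hai) hcol
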